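/- In the rewrite game over {a,b} with rules a → ε, a^2 → ε, a^3 → ε, b → ε, decompose w = a^{i_0} b a^{i_1} b ⋯ b a^{i_k} and set S(w) = ((k + α_1) mod 2, α_2 mod 2, α_3 mod 2) ∈ {0,1}^3, where α_r = #{ j : i_j ≡ r (mod 4) }. Then the Grundy value of w is 0 if S(w) ∈ {(0,0,0),(1,1,1)}, 1 if S(w) ∈ {(0,1,1),(1,0,0)}, 2 if S(w) ∈ {(0,1,0),(1,0,1)}, and 3 if S(w) ∈ {(0,0,1),(1,1,0)}. -/

import Mathlib

inductive AB | a | b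
deriving DecidableEq

/-- One move of the game `{a → ε, a² → ε, a³ → ε, b → ε}`. -/
def Step (w w' : List AB) : Prop :=
  ∃ x y : List AB, w' = x ++ y ∧
    (w = x ++ [AB.a] ++ y ∨ w = x ++ [AB.a, AB.a] ++ y ∨
     w = x ++ [AB.a, AB.a, AB.a] ++ y ∨ w = x ++ [AB.b] ++ y)

/-- The minimum excluded value of a set of naturals. -/
noncomputable def mex (S : Set ℕ) : ℕ := sInf {n | n ∉ S}

/-- `g` is the Grundy function of the game with moves `step`. -/
def IsGrundy (step : List AB → List AB → Prop) (g : List AB → ℕ) : Prop :=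
  ∀ w, g w = mex (g '' {w' | step w w'})

/-- The lengths `i_0, …, i_k` of the (possibly empty) maximal blocks of `a`'s in
the decomposition `w = a^{i_0} b a^{i_1} b ⋯ b a^{i_k}`. -/
def blocks (w : List AB) : List ℕ := (w.splitOn AB.b).map List.length

/-- `α_r`: the number of blocks of `a`'s whose length is `≡ r (mod 4)`. -/
def alpha (w : List AB) (r : ℕ) : ℕ := (blocks w).countP (fun i => i % 4 == r)

/-- `S(w) = ((k + α₁) mod 2, α₂ mod 2, α₃ mod 2)`, where `k = |w|_b`. -/
def S (w : List AB) : ZMod 2 × ZMod 2 × ZMod 2 :=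
  (((w.count AB.b + alpha w 1 : ℕ) : ZMod 2),
   ((alpha w 2 : ℕ) : ZMod 2), ((alpha w 3 : ℕ) : ZMod 2))


-- splitOn cons lemmas
lemma sp_nil : ([] : List AB).splitOn AB.b = [[]] := rfl
lemma sp_cons_a (w : List AB) :
    (AB.a :: w).splitOn AB.b = (w.splitOn AB.b).modifyHead (AB.a :: ·) := by
  simp [List.splitOn, List.splitOnP_cons]
lemma sp_cons_b (w : List AB) :
    (AB.b :: w).splitOn AB.b = [] :: w.splitOn AB.b := by
  simp [List.splitOn, List.splitOnP_cons]
lemma sp_ne_nil (w : List AB) : w.splitOn AB.b ≠ [] := List.splitOnP_ne_nil _ w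

def glue : List (List AB) → List (List AB) → List (List AB)
  | [], ys => ys
  | [x], [] => [x]
  | [x], y :: ys => (x ++ y) :: ys
  | x :: x' :: xs, ys => x :: glue (x' :: xs) ys

def glueN : List ℕ → List ℕ → List ℕ
  | [], ys => ys
  | [x], [] => [x]
  | [x], y :: ys => (x + y) :: ys
  | x :: x' :: xs, ys => x :: glueN (x' :: xs) ys

lemma glue_cons₂ (x x' : List AB) (xs ys : List (List AB)) :
    glue (x :: x' :: xs) ys = x :: glue (x' :: xs) ys := by
  cases ys <;> rfl

lemma glueN_cons₂ (x x' : ℕ) (xs ys : List ℕ) :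
    glueN (x :: x' :: xs) ys = x :: glueN (x' :: xs) ys := by
  cases ys <;> rfl

lemma glue_modifyHead (c : AB) (xs ys : List (List AB)) (hxs : xs ≠ []) :
    glue (xs.modifyHead (c :: ·)) ys = (glue xs ys).modifyHead (c :: ·) := by
  match xs, ys with
  | [x], [] => rfl
  | [x], y :: ys => rfl
  | x :: x' :: xs, ys => rfl

lemma sp_append (u v : List AB) :
    (u ++ v).splitOn AB.b = glue (u.splitOn AB.b) (v.splitOn AB.b) := by
  induction u with
  | nil =>
    simp only [List.nil_append, sp_nil]
    match h : v.splitOn AB.b, sp_ne_nil v with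
    | y :: ys, _ => rfl
  | cons c u ih =>
    cases c with
    | a =>
      rw [List.cons_append, sp_cons_a, sp_cons_a, ih, glue_modifyHead _ _ _ (sp_ne_nil u)]
    | b =>
      rw [List.cons_append, sp_cons_b, sp_cons_b, ih]
      match h : u.splitOn AB.b, sp_ne_nil u with
      | x :: xs, _ => rw [glue_cons₂]

lemma glue_nil_cons (xs ys : List (List AB)) (hxs : xs ≠ []) :
    glue xs ([] :: ys) = xs ++ ys := by
  induction xs with
  | nil => simp at hxs
  | cons x xs ih =>
    match xs, ys with
    | [], ys => simp [glue]
    | x' :: xs, ys => rw [glue_cons₂, ih (by simp)]; rfl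

lemma map_length_glue (xs ys : List (List AB)) :
    (glue xs ys).map List.length = glueN (xs.map List.length) (ys.map List.length) := by
  induction xs with
  | nil => rfl
  | cons x xs ih =>
    match xs, ys with
    | [], [] => rfl
    | [], y :: ys => simp [glue, glueN]
    | x' :: xs, ys =>
      simp only [List.map_cons] at ih ⊢
      rw [glue_cons₂, glueN_cons₂, List.map_cons, ih]

lemma blocks_append (u v : List AB) : blocks (u ++ v) = glueN (blocks u) (blocks v) := by
  rw [blocks, sp_append, map_length_glue]; rfl

lemma blocks_append_b (u v : List AB) : blocks (u ++ AB.b :: v) = blocks u ++ blocks v := by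
  have : u ++ AB.b :: v = u ++ ([AB.b] ++ v) := by simp
  rw [this, blocks, sp_append, sp_append, show ([AB.b] : List AB).splitOn AB.b = [[], []] from rfl,
    show glue [[],[]] (v.splitOn AB.b) = [] :: glue [[]] (v.splitOn AB.b) from rfl]
  have h1 : glue [[]] (v.splitOn AB.b) = v.splitOn AB.b := by
    match h : v.splitOn AB.b, sp_ne_nil v with
    | y :: ys, _ => simp [glue]
  rw [h1, glue_nil_cons _ _ (sp_ne_nil u)]
  simp [blocks]

lemma blocks_ne_nil (w : List AB) : blocks w ≠ [] := by
  simp [blocks, sp_ne_nil w]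

lemma glueN_cons₂' (x : ℕ) (xs ys : List ℕ) {y : ℕ} {ys' : List ℕ} (h : xs = y :: ys') :
    glueN (x :: xs) ys = x :: glueN xs ys := by
  subst h; exact glueN_cons₂ _ _ _ _

lemma glueN_last (p : List ℕ) (q h : ℕ) (t : List ℕ) :
    glueN (p ++ [q]) (h :: t) = p ++ (q + h) :: t := by
  induction p with
  | nil => rfl
  | cons x p ih =>
    obtain ⟨y, ys, hp⟩ := List.exists_cons_of_ne_nil
      (List.append_ne_nil_of_right_ne_nil p (by simp : [q] ≠ []))
    rw [List.cons_append, glueN_cons₂' _ _ _ hp, ih]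
    rfl

def rep (n : ℕ) : List AB := List.replicate n AB.a

lemma blocks_rep (n : ℕ) : blocks (rep n) = [n] := by
  rw [blocks, rep, List.splitOn, List.splitOnP_eq_single]
  · simp
  · intro x hx
    simp [List.eq_of_mem_replicate hx]

def wordOf : List ℕ → List AB
  | [] => []
  | [n] => rep n
  | n :: m :: L => rep n ++ AB.b :: wordOf (m :: L)

lemma blocks_wordOf : ∀ L : List ℕ, L ≠ [] → blocks (wordOf L) = L
  | [n], _ => by rw [wordOf, blocks_rep]
  | n :: m :: L, _ => by
    rw [wordOf, blocks_append_b, blocks_rep, blocks_wordOf (m :: L) (by simp)]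
    rfl

-- every part of splitOn is a replicate of a's
lemma sp_parts (w : List AB) : ∀ l ∈ w.splitOn AB.b, l = rep l.length := by
  induction w with
  | nil => intro l hl; simp [sp_nil] at hl; simp [hl, rep]
  | cons c w ih =>
    cases c with
    | a =>
      rw [sp_cons_a]
      match h : w.splitOn AB.b, sp_ne_nil w with
      | x :: xs, _ =>
        intro l hl
        rcases List.mem_cons.1 hl with rfl | hl
        · have := ih x (by rw [h]; exact List.mem_cons_self)
          simp only [List.length_cons]
          rw [rep, List.replicate_succ, ← rep]
          rw [← this]
        · exact ih l (by rw [h]; exact List.mem_cons_of_mem _ hl)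
    | b =>
      rw [sp_cons_b]
      intro l hl
      rcases List.mem_cons.1 hl with rfl | hl
      · rfl
      · exact ih l hl

lemma intercalate_wordOf : ∀ parts : List (List AB), parts ≠ [] →
    (∀ l ∈ parts, l = rep l.length) → wordOf (parts.map List.length) = [AB.b].intercalate parts
  | [l], _, h => by
    simp [wordOf, List.intercalate]
    exact (h l (by simp)).symm
  | l :: l' :: parts, _, h => by
    have ih := intercalate_wordOf (l' :: parts) (by simp) (fun x hx => h x (by simp [hx]))
    simp only [List.map_cons] at ih ⊢
    rw [wordOf, ih]
    have hint : [AB.b].intercalate (l :: l' :: parts)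
        = l ++ AB.b :: [AB.b].intercalate (l' :: parts) := by
      simp [List.intercalate]
    rw [hint, ← h l (by simp)]

lemma w_eq_wordOf (w : List AB) : wordOf (blocks w) = w := by
  rw [blocks, intercalate_wordOf _ (sp_ne_nil w) (sp_parts w)]
  exact List.intercalate_splitOn AB.b

def V (L : List ℕ) : ℕ :=
  (L.length + 1 + L.countP (fun i => i % 4 == 1) + L.countP (fun i => i % 4 == 3)) % 2
  + 2 * ((L.countP (fun i => i % 4 == 2) + L.countP (fun i => i % 4 == 3)) % 2)

def BStep (L L' : List ℕ) : Prop :=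
  (∃ p s n d, (d = 1 ∨ d = 2 ∨ d = 3) ∧ L = p ++ (n + d) :: s ∧ L' = p ++ n :: s) ∨
  (∃ p s m n, L = p ++ m :: n :: s ∧ L' = p ++ (m + n) :: s)


lemma rep_one : rep 1 = [AB.a] := rfl
lemma rep_two : rep 2 = [AB.a, AB.a] := rfl
lemma rep_three : rep 3 = [AB.a, AB.a, AB.a] := rfl

lemma blocks_decomp_a (x y : List AB) (d : ℕ) :
    ∃ p q h t, blocks x = p ++ [q] ∧ blocks y = h :: t ∧
      blocks (x ++ rep d ++ y) = p ++ (q + h + d) :: t ∧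
      blocks (x ++ y) = p ++ (q + h) :: t := by
  obtain ⟨h, t, hy⟩ := List.exists_cons_of_ne_nil (blocks_ne_nil y)
  rcases List.eq_nil_or_concat (blocks x) with hx | ⟨p, q, hx⟩
  · exact absurd hx (blocks_ne_nil x)
  rw [List.concat_eq_append] at hx
  refine ⟨p, q, h, t, hx, hy, ?_, ?_⟩
  · have h1 : blocks (rep d ++ y) = (d + h) :: t := by
      rw [blocks_append, blocks_rep, hy]; rfl
    rw [List.append_assoc, blocks_append, hx, h1, glueN_last]
    have : q + (d + h) = q + h + d := by omega
    rw [this]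
  · rw [blocks_append, hx, hy, glueN_last]

lemma forward {w w' : List AB} (hs : Step w w') : BStep (blocks w) (blocks w') := by
  obtain ⟨x, y, rfl, hw⟩ := hs
  rcases hw with rfl | rfl | rfl | rfl
  · obtain ⟨p, q, h, t, _, _, h3, h4⟩ := blocks_decomp_a x y 1
    rw [rep_one] at h3
    exact Or.inl ⟨p, t, q + h, 1, Or.inl rfl, h3, h4⟩
  · obtain ⟨p, q, h, t, _, _, h3, h4⟩ := blocks_decomp_a x y 2
    rw [rep_two] at h3
    exact Or.inl ⟨p, t, q + h, 2, Or.inr (Or.inl rfl), h3, h4⟩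
  · obtain ⟨p, q, h, t, _, _, h3, h4⟩ := blocks_decomp_a x y 3
    rw [rep_three] at h3
    exact Or.inl ⟨p, t, q + h, 3, Or.inr (Or.inr rfl), h3, h4⟩
  · obtain ⟨h, t, hy⟩ := List.exists_cons_of_ne_nil (blocks_ne_nil y)
    rcases List.eq_nil_or_concat (blocks x) with hx | ⟨p, q, hx⟩
    · exact absurd hx (blocks_ne_nil x)
    rw [List.concat_eq_append] at hx
    refine Or.inr ⟨p, t, q, h, ?_, ?_⟩
    · have : x ++ [AB.b] ++ y = x ++ AB.b :: y := by simp
      rw [this, blocks_append_b, hx, hy]; simp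
    · rw [blocks_append, hx, hy, glueN_last]

def flatW (p : List ℕ) : List AB := (p.map (fun n => rep n ++ [AB.b])).flatten

def tailW : List ℕ → List AB
  | [] => []
  | n :: L => AB.b :: wordOf (n :: L)

lemma wordOf_cons' (x : ℕ) {l : List ℕ} {y : ℕ} {ys : List ℕ} (h : l = y :: ys) :
    wordOf (x :: l) = rep x ++ AB.b :: wordOf l := by
  subst h; rfl

lemma wordOf_append (p : List ℕ) (m : ℕ) (s : List ℕ) :
    wordOf (p ++ m :: s) = flatW p ++ rep m ++ tailW s := by
  induction p with
  | nil =>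
    cases s with
    | nil => simp [wordOf, flatW, tailW]
    | cons n s => simp [wordOf, flatW, tailW]
  | cons x p ih =>
    obtain ⟨y, ys, hp⟩ := List.exists_cons_of_ne_nil
      (List.append_ne_nil_of_right_ne_nil p (by simp : m :: s ≠ []))
    rw [List.cons_append, wordOf_cons' x hp, ih]
    simp [flatW, List.append_assoc]

lemma backward {w : List AB} {L' : List ℕ} (hB : BStep (blocks w) L') :
    ∃ w', Step w w' ∧ blocks w' = L' := by
  rcases hB with ⟨p, s, n, d, hd, hL, rfl⟩ | ⟨p, s, m, n, hL, rfl⟩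
  · have hw : w = (flatW p ++ rep n) ++ rep d ++ tailW s := by
      rw [← w_eq_wordOf w, hL, wordOf_append, rep, List.replicate_add, ← rep, ← rep]
      simp [List.append_assoc]
    refine ⟨flatW p ++ rep n ++ tailW s, ⟨flatW p ++ rep n, tailW s, rfl, ?_⟩, ?_⟩
    · rcases hd with rfl | rfl | rfl
      · exact Or.inl (by rw [← rep_one]; exact hw)
      · exact Or.inr (Or.inl (by rw [← rep_two]; exact hw))
      · exact Or.inr (Or.inr (Or.inl (by rw [← rep_three]; exact hw)))
    · rw [show flatW p ++ rep n ++ tailW s = wordOf (p ++ n :: s) from (wordOf_append p n s).symm,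
        blocks_wordOf _ (List.append_ne_nil_of_right_ne_nil p (by simp))]
  · have hw : w = (flatW p ++ rep m) ++ [AB.b] ++ (rep n ++ tailW s) := by
      rw [← w_eq_wordOf w, hL, wordOf_append]
      have : tailW (n :: s) = AB.b :: wordOf (n :: s) := rfl
      rw [this, show wordOf (n :: s) = rep n ++ tailW s from by
        simpa [flatW] using wordOf_append [] n s]
      simp [List.append_assoc]
    refine ⟨flatW p ++ rep m ++ (rep n ++ tailW s),
      ⟨flatW p ++ rep m, rep n ++ tailW s, rfl, Or.inr (Or.inr (Or.inr hw))⟩, ?_⟩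
    have : flatW p ++ rep m ++ (rep n ++ tailW s) = wordOf (p ++ (m + n) :: s) := by
      rw [wordOf_append, show rep (m + n) = rep m ++ rep n from by
        rw [rep, rep, rep, List.replicate_add]]
      simp [List.append_assoc]
    rw [this, blocks_wordOf _ (List.append_ne_nil_of_right_ne_nil p (by simp))]

lemma step_length {w w' : List AB} (hs : Step w w') : w'.length < w.length := by
  obtain ⟨x, y, rfl, hw⟩ := hs
  rcases hw with rfl | rfl | rfl | rfl <;> simp <;> omega

lemma no_step_nil (w' : List AB) : ¬ Step [] w' := by
  rintro ⟨x, y, _, h⟩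
  rcases h with h | h | h | h <;> simp at h

lemma count_b (w : List AB) : (blocks w).length = w.count AB.b + 1 := by
  induction w with
  | nil => rfl
  | cons c w ih =>
    cases c with
    | a => simpa [blocks, sp_cons_a, List.count_cons] using ih
    | b => simpa [blocks, sp_cons_b, List.count_cons] using ih

lemma VA {L L' : List ℕ} (h : BStep L L') : V L' ≠ V L := by
  rcases h with ⟨p, s, n, d, hd, rfl, rfl⟩ | ⟨p, s, m, n, rfl, rfl⟩
  · have h4 : n % 4 = 0 ∨ n % 4 = 1 ∨ n % 4 = 2 ∨ n % 4 = 3 := by omega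
    rcases hd with rfl | rfl | rfl <;> rcases h4 with h | h | h | h <;>
      simp [V, List.countP_append, List.countP_cons, Nat.add_mod _ _ 4, h] <;> omega
  · have h4 : m % 4 = 0 ∨ m % 4 = 1 ∨ m % 4 = 2 ∨ m % 4 = 3 := by omega
    have h4' : n % 4 = 0 ∨ n % 4 = 1 ∨ n % 4 = 2 ∨ n % 4 = 3 := by omega
    rcases h4 with h | h | h | h <;> rcases h4' with h' | h' | h' | h' <;>
      simp [V, List.countP_append, List.countP_cons, Nat.add_mod m n 4, h, h'] <;> omega

lemma exists_split {l : List ℕ} {P : ℕ → Bool} (h : 0 < l.countP P) :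
    ∃ p s i, l = p ++ i :: s ∧ P i := by
  rw [List.countP_pos_iff] at h
  obtain ⟨i, hi, hp⟩ := h
  obtain ⟨p, s, rfl⟩ := List.append_of_mem hi
  exact ⟨p, s, i, rfl, hp⟩

lemma V_cand (p s : List ℕ) (u v : ℕ) (hu : u % 4 = 0) (hv : v % 4 = 1)
    (hps : (p.countP (fun i => i % 4 == 2) + s.countP (fun i => i % 4 == 2)
      + p.countP (fun i => i % 4 == 3) + s.countP (fun i => i % 4 == 3)) % 2 = 0) :
    V (p ++ u :: s) < 2 ∧ V (p ++ v :: s) < 2 ∧ V (p ++ u :: s) + V (p ++ v :: s) = 1 := by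
  simp [V, List.countP_append, List.countP_cons, hu, hv]
  omega

lemma VB {L : List ℕ} (hL : L ≠ []) {m : ℕ} (hm : m < V L) :
    ∃ L', BStep L L' ∧ V L' = m := by
  by_cases hb : (L.countP (fun i => i % 4 == 2) + L.countP (fun i => i % 4 == 3)) % 2 = 1
      ∧ m < 2
  · obtain ⟨hb1, hm2⟩ := hb
    have hpos : 0 < L.countP (fun i => i % 4 == 2) ∨ 0 < L.countP (fun i => i % 4 == 3) := by
      omega
    have hex : ∃ p s i, L = p ++ i :: s ∧ (i % 4 = 2 ∨ i % 4 = 3) := by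
      rcases hpos with h | h
      · obtain ⟨p, s, i, h1, h2⟩ := exists_split h
        exact ⟨p, s, i, h1, Or.inl (by simpa using h2)⟩
      · obtain ⟨p, s, i, h1, h2⟩ := exists_split h
        exact ⟨p, s, i, h1, Or.inr (by simpa using h2)⟩
    obtain ⟨p, s, i, rfl, hi⟩ := hex
    have hps : (p.countP (fun i => i % 4 == 2) + s.countP (fun i => i % 4 == 2)
        + p.countP (fun i => i % 4 == 3) + s.countP (fun i => i % 4 == 3)) % 2 = 0 := by
      rcases hi with h | h <;>
        simp [List.countP_append, List.countP_cons, h] at hb1 <;> omega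
    rcases hi with h | h
    · have h4 : i - 2 ≤ i ∧ 2 ≤ i := by omega
      obtain ⟨c1, c2, c3⟩ := V_cand p s (i - 2) (i - 1) (by omega) (by omega) hps
      by_cases hc : V (p ++ (i - 2) :: s) = m
      · exact ⟨p ++ (i - 2) :: s,
          Or.inl ⟨p, s, i - 2, 2, by omega, by rw [show i - 2 + 2 = i by omega], rfl⟩, hc⟩
      · exact ⟨p ++ (i - 1) :: s,
          Or.inl ⟨p, s, i - 1, 1, by omega, by rw [show i - 1 + 1 = i by omega], rfl⟩,
          by omega⟩
    · have h4 : 3 ≤ i := by omega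
      obtain ⟨c1, c2, c3⟩ := V_cand p s (i - 3) (i - 2) (by omega) (by omega) hps
      by_cases hc : V (p ++ (i - 3) :: s) = m
      · exact ⟨p ++ (i - 3) :: s,
          Or.inl ⟨p, s, i - 3, 3, by omega, by rw [show i - 3 + 3 = i by omega], rfl⟩, hc⟩
      · exact ⟨p ++ (i - 2) :: s,
          Or.inl ⟨p, s, i - 2, 2, by omega, by rw [show i - 2 + 2 = i by omega], rfl⟩,
          by omega⟩
  · have key : (L.length + 1 + L.countP (fun i => i % 4 == 1)
        + L.countP (fun i => i % 4 == 3)) % 2 = 1 ∧ m + 1 = V L := by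
      simp only [V] at hm ⊢
      omega
    by_cases h13 : 0 < L.countP (fun i => i % 4 == 1) + L.countP (fun i => i % 4 == 3)
    · have hpos : 0 < L.countP (fun i => i % 4 == 1) ∨ 0 < L.countP (fun i => i % 4 == 3) := by
        omega
      have hex : ∃ p s i, L = p ++ i :: s ∧ (i % 4 = 1 ∨ i % 4 = 3) := by
        rcases hpos with h | h
        · obtain ⟨p, s, i, h1, h2⟩ := exists_split h
          exact ⟨p, s, i, h1, Or.inl (by simpa using h2)⟩
        · obtain ⟨p, s, i, h1, h2⟩ := exists_split h
          exact ⟨p, s, i, h1, Or.inr (by simpa using h2)⟩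
      obtain ⟨p, s, i, rfl, hi⟩ := hex
      refine ⟨p ++ (i - 1) :: s,
        Or.inl ⟨p, s, i - 1, 1, Or.inl rfl, by rw [show i - 1 + 1 = i by omega], rfl⟩, ?_⟩
      rcases hi with h | h <;>
      · have h' : (i - 1) % 4 = i % 4 - 1 := by omega
        simp [V, List.countP_append, List.countP_cons, h, h'] at key ⊢
        omega
    · have hc1 : L.countP (fun i => i % 4 == 1) = 0 := by omega
      have hc3 : L.countP (fun i => i % 4 == 3) = 0 := by omega
      have hlen : L.length % 2 = 0 := by
        rw [hc1, hc3] at key; omega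
      match L, hL with
      | [i], _ => simp at hlen
      | i :: j :: t, _ =>
        have hi1 : ¬ i % 4 = 1 := fun h => by simp [List.countP_cons, h] at hc1
        have hi3 : ¬ i % 4 = 3 := fun h => by simp [List.countP_cons, h] at hc3
        have hj1 : ¬ j % 4 = 1 := fun h => by simp [List.countP_cons, h] at hc1
        have hj3 : ¬ j % 4 = 3 := fun h => by simp [List.countP_cons, h] at hc3
        refine ⟨(i + j) :: t, Or.inr ⟨[], t, i, j, rfl, rfl⟩, ?_⟩
        have h4 : i % 4 = 0 ∨ i % 4 = 2 := by omega
        have h4' : j % 4 = 0 ∨ j % 4 = 2 := by omega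
        rcases h4 with h | h <;> rcases h4' with h' | h' <;>
        · simp [V, List.countP_cons, Nat.add_mod i j 4, h, h'] at key ⊢
          omega


lemma mex_eq {T : Set ℕ} {x : ℕ} (h1 : x ∉ T) (h2 : ∀ m < x, m ∈ T) : mex T = x := by
  have hx : x ∈ {n | n ∉ T} := h1
  refine le_antisymm (Nat.sInf_le hx) ?_
  by_contra h
  push_neg at h
  exact Nat.sInf_mem (Set.nonempty_of_mem hx) (h2 _ h)

lemma zcast (n : ℕ) : ((n : ZMod 2) = 0 ↔ n % 2 = 0) ∧ ((n : ZMod 2) = 1 ↔ n % 2 = 1) := by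
  have h : ((n % 2 : ℕ) : ZMod 2) = (n : ZMod 2) := ZMod.natCast_mod n 2
  have h2 : n % 2 = 0 ∨ n % 2 = 1 := by omega
  rcases h2 with h2 | h2 <;> rw [← h, h2] <;> simp

lemma main (g : List AB → ℕ) (hg : IsGrundy Step g) :
    ∀ n (w : List AB), w.length ≤ n → g w = V (blocks w) := by
  intro n
  induction n with
  | zero =>
    intro w hw
    have hwn : w = [] := List.length_eq_zero_iff.1 (Nat.le_zero.1 hw)
    subst hwn
    rw [hg []]
    have himg : g '' {w' | Step [] w'} = ∅ := by
      have : {w' | Step [] w'} = ∅ := by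
        ext w'; simp [no_step_nil]
      rw [this, Set.image_empty]
    rw [himg]
    have hV : V (blocks ([] : List AB)) = 0 := rfl
    rw [hV]
    exact mex_eq (by simp) (fun m hm => absurd hm (Nat.not_lt_zero m))
  | succ n ih =>
    intro w hw
    have hfwd : ∀ w', Step w w' → g w' = V (blocks w') := fun w' hs =>
      ih w' (by have := step_length hs; omega)
    rw [hg w]
    refine mex_eq ?_ ?_
    · rintro ⟨w', hw', heq⟩
      exact VA (forward hw') ((hfwd w' hw').symm.trans heq)
    · intro m hm
      obtain ⟨L', hB, hV⟩ := VB (blocks_ne_nil w) hm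
      obtain ⟨w', hs, hbw⟩ := backward hB
      exact ⟨w', hs, by rw [hfwd w' hs, hbw, hV]⟩

lemma final_V (w : List AB) (x y z : ℕ)
    (h1 : (w.count AB.b + alpha w 1) % 2 = x)
    (h2 : alpha w 2 % 2 = y) (h3 : alpha w 3 % 2 = z) :
    V (blocks w) = (x + z) % 2 + 2 * ((y + z) % 2) := by
  have hk : (blocks w).length = w.count AB.b + 1 := count_b w
  simp only [alpha] at h1 h2 h3
  simp only [V]
  omega


theorem stmt12 (g : List AB → ℕ) (hg : IsGrundy Step g) :
    ∀ w : List AB,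
      (S w = (0, 0, 0) ∨ S w = (1, 1, 1) → g w = 0) ∧
      (S w = (0, 1, 1) ∨ S w = (1, 0, 0) → g w = 1) ∧
      (S w = (0, 1, 0) ∨ S w = (1, 0, 1) → g w = 2) ∧
      (S w = (0, 0, 1) ∨ S w = (1, 1, 0) → g w = 3)     := by
  intro w
  have hgw : g w = V (blocks w) := main g hg w.length w le_rfl
  refine ⟨?_, ?_, ?_, ?_⟩ <;> rintro (hS | hS) <;>
    simp only [S, Prod.mk.injEq] at hS <;> obtain ⟨h1, h2, h3⟩ := hS <;> rw [hgw]
  · rw [(zcast _).1] at h1; rw [(zcast _).1] at h2; rw [(zcast _).1] at h3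
    rw [final_V w 0 0 0 h1 h2 h3]
  · rw [(zcast _).2] at h1; rw [(zcast _).2] at h2; rw [(zcast _).2] at h3
    rw [final_V w 1 1 1 h1 h2 h3]
  · rw [(zcast _).1] at h1; rw [(zcast _).2] at h2; rw [(zcast _).2] at h3
    rw [final_V w 0 1 1 h1 h2 h3]
  · rw [(zcast _).2] at h1; rw [(zcast _).1] at h2; rw [(zcast _).1] at h3
    rw [final_V w 1 0 0 h1 h2 h3]
  · rw [(zcast _).1] at h1; rw [(zcast _).2] at h2; rw [(zcast _).1] at h3
    rw [final_V w 0 1 0 h1 h2 h3]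
  · rw [(zcast _).2] at h1; rw [(zcast _).1] at h2; rw [(zcast _).2] at h3
    rw [final_V w 1 0 1 h1 h2 h3]
  · rw [(zcast _).1] at h1; rw [(zcast _).1] at h2; rw [(zcast _).2] at h3
    rw [final_V w 0 0 1 h1 h2 h3]
  · rw [(zcast _).2] at h1; rw [(zcast _).2] at h2; rw [(zcast _).1] at h3
    rw [final_V w 1 1 0 h1 h2 h3]
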